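/- Let B_1, …, B_b be the blocks of a Steiner triple system on a 13-point set X (so b = 26), and for each block B_i let T_{i1}, T_{i2}, T_{i3} denote the three rooted binary trees on leaf set B_i. Then the map sending f : {1,…,26} → {1,2,3} to any rooted binary tree T'_f on leaf set X satisfying T'_f | B_k = T_{k f(k)} for all k cannot be injective-consistent: there is no family (T'_f) of rooted binary X-trees, indexed by all 3^26 functions f, such that T'_f | B_k = T_{k f(k)} for every k and f. (Equivalently: the map f ↦ T'_f would be injective into a set of size 23!! < 3^26, a contradiction.) -/

import Mathlib

def IsHierarchyOn {α : Type*} [DecidableEq α] (X : Finset α) (T : Finset (Finset α)) : Prop :=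
  (∀ A ∈ T, A ⊆ X ∧ A.Nonempty) ∧ X ∈ T ∧ (∀ x ∈ X, ({x} : Finset α) ∈ T) ∧
  ∀ A ∈ T, ∀ B ∈ T, A ∩ B = ∅ ∨ A ⊆ B ∨ B ⊆ A

/-- A rooted binary phylogenetic tree on `X`, viewed as a hierarchy: it has the maximal
number `2|X| - 1` of clusters. -/
def IsBinaryHierarchyOn {α : Type*} [DecidableEq α] (X : Finset α)
    (T : Finset (Finset α)) : Prop :=
  IsHierarchyOn X T ∧ T.card = 2 * X.card - 1

/-- Restriction `T|W` of a tree (hierarchy) to a leaf subset `W`. -/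
def restrict {α : Type*} [DecidableEq α] (T : Finset (Finset α)) (W : Finset α) :
    Finset (Finset α) :=
  (T.image (· ∩ W)).filter (·.Nonempty)

section Aux
variable {α : Type*} [DecidableEq α] {X W : Finset α} {T : Finset (Finset α)} {x : α} {A : Finset α}

lemma mem_restrict {C : Finset α} :
    C ∈ restrict T W ↔ (∃ D ∈ T, D ∩ W = C) ∧ C.Nonempty := by
  simp [restrict, Finset.mem_filter, Finset.mem_image]

lemma two_le_card_of_ne_singleton {C : Finset α} (hx : x ∈ C) (hne : C ≠ {x}) :
    2 ≤ C.card := by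
  rcases Nat.lt_or_ge C.card 2 with h | h
  · interval_cases h' : C.card
    · exact absurd (Finset.card_eq_zero.mp h') (by rintro rfl; exact absurd hx (by simp))
    · obtain ⟨a, rfl⟩ := Finset.card_eq_one.mp h'
      simp only [Finset.mem_singleton] at hx
      exact absurd (by rw [hx]) hne
  · exact h

lemma exists_minCluster (hT : IsHierarchyOn X T) (hx : x ∈ X) (hX2 : 2 ≤ X.card) :
    ∃ A ∈ T, x ∈ A ∧ 2 ≤ A.card ∧ ∀ C ∈ T, x ∈ C → 2 ≤ C.card → A ⊆ C := by
  obtain ⟨h1, h2, h3, h4⟩ := hT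
  set F := T.filter (fun C => x ∈ C ∧ 2 ≤ C.card) with hF
  have hFne : F.Nonempty := ⟨X, by simp [hF, h2, hx, hX2]⟩
  obtain ⟨A, hAF, hAmin⟩ := F.exists_min_image Finset.card hFne
  simp only [hF, Finset.mem_filter] at hAF
  refine ⟨A, hAF.1, hAF.2.1, hAF.2.2, fun C hC hxC h2C => ?_⟩
  have hCF : C ∈ F := by simp [hF, hC, hxC, h2C]
  rcases h4 A hAF.1 C hC with hd | hs | hs
  · exact absurd (Finset.eq_empty_iff_forall_notMem.mp hd x (by simp [hAF.2.1, hxC])) (by simp)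
  · exact hs
  · exact (Finset.eq_of_subset_of_card_le hs (hAmin C hCF)).ge

lemma restrict_hier (hT : IsHierarchyOn X T) (hW : W ⊆ X) (hWne : W.Nonempty) :
    IsHierarchyOn W (restrict T W) := by
  obtain ⟨h1, h2, h3, h4⟩ := hT
  refine ⟨?_, ?_, ?_, ?_⟩
  · intro A hA
    rw [mem_restrict] at hA
    obtain ⟨⟨D, _, rfl⟩, hne⟩ := hA
    exact ⟨Finset.inter_subset_right, hne⟩
  · rw [mem_restrict]
    exact ⟨⟨X, h2, Finset.inter_eq_right.mpr hW⟩, hWne⟩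
  · intro w hw
    rw [mem_restrict]
    exact ⟨⟨{w}, h3 w (hW hw), by simp [Finset.inter_eq_left, hw]⟩, by simp⟩
  · intro A hA B hB
    rw [mem_restrict] at hA hB
    obtain ⟨⟨D, hD, rfl⟩, _⟩ := hA
    obtain ⟨⟨E, hE, rfl⟩, _⟩ := hB
    rcases h4 D hD E hE with h | h | h
    · left
      rw [← Finset.inter_inter_distrib_right] at *
      rw [h]
      simp
    · exact Or.inr (Or.inl (Finset.inter_subset_inter_right h))
    · exact Or.inr (Or.inr (Finset.inter_subset_inter_right h))


-- minimality in the subset sense, from card-minimality statement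
lemma min_subset_of (hT : IsHierarchyOn X T) (hA : A ∈ T) (hxA : x ∈ A) (hA2 : 2 ≤ A.card)
    (hmin : ∀ C ∈ T, x ∈ C → 2 ≤ C.card → A ⊆ C) :
    ∀ C ∈ T, x ∈ C → C ≠ {x} → A ⊆ C := fun C hC hxC hne =>
  hmin C hC hxC (two_le_card_of_ne_singleton hxC hne)

lemma card_le_restrict (hT : IsHierarchyOn X T) (hx : x ∈ X) (hX2 : 2 ≤ X.card)
    (hA : A ∈ T) (hxA : x ∈ A) (hA2 : 2 ≤ A.card)
    (hmin : ∀ C ∈ T, x ∈ C → 2 ≤ C.card → A ⊆ C) :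
    T.card ≤ (restrict T (X.erase x)).card + 2 := by
  obtain ⟨h1, h2, h3, h4⟩ := hT
  have hS : (A.erase x).Nonempty := by
    rw [← Finset.card_pos, Finset.card_erase_of_mem hxA]; omega
  set T₀ := (T.erase {x}).erase A with hT₀
  have hmem : ∀ C ∈ T₀, C ∈ T ∧ C ≠ {x} ∧ C ≠ A := by
    intro C hC
    simp only [hT₀, Finset.mem_erase] at hC
    exact ⟨hC.2.2, hC.2.1, hC.1⟩
  have hsub : ∀ C ∈ T₀, C.erase x ∈ restrict T (X.erase x) := by
    intro C hC
    obtain ⟨hCT, hne1, _⟩ := hmem C hC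
    have hCX : C ⊆ X := (h1 C hCT).1
    have : C ∩ X.erase x = C.erase x := by
      ext a; simp only [Finset.mem_inter, Finset.mem_erase]
      constructor
      · rintro ⟨ha, hne, _⟩; exact ⟨hne, ha⟩
      · rintro ⟨hne, ha⟩; exact ⟨ha, hne, hCX ha⟩
    rw [mem_restrict]
    refine ⟨⟨C, hCT, this⟩, ?_⟩
    rcases (h1 C hCT).2 with ⟨a, ha⟩
    by_cases hax : a = x
    · obtain ⟨b, hb, hbx⟩ : ∃ b ∈ C, b ≠ x := by
        by_contra hcon
        push_neg at hcon
        exact hne1 (Finset.eq_singleton_iff_unique_mem.mpr ⟨hax ▸ ha, hcon⟩)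
      exact ⟨b, Finset.mem_erase.mpr ⟨hbx, hb⟩⟩
    · exact ⟨a, Finset.mem_erase.mpr ⟨hax, ha⟩⟩
  have hinj : Set.InjOn (fun C : Finset α => C.erase x) ↑T₀ := by
    intro C1 hC1 C2 hC2 heq
    simp only at heq
    obtain ⟨hC1T, hC1ne, hC1A⟩ := hmem C1 (by exact_mod_cast hC1)
    obtain ⟨hC2T, hC2ne, hC2A⟩ := hmem C2 (by exact_mod_cast hC2)
    by_cases h1x : x ∈ C1 <;> by_cases h2x : x ∈ C2
    · rw [← Finset.insert_erase h1x, ← Finset.insert_erase h2x, heq]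
    · -- x ∈ C1, x ∉ C2 : C2 = C1.erase x
      exfalso
      have hC2eq : C2 = C1.erase x := by rw [heq, Finset.erase_eq_of_notMem h2x]
      have hAC1 : A ⊆ C1 := min_subset_of ⟨h1, h2, h3, h4⟩ hA hxA hA2 hmin C1 hC1T h1x hC1ne
      have hSC2 : A.erase x ⊆ C2 := by
        rw [hC2eq]; exact Finset.erase_subset_erase x hAC1
      rcases h4 C2 hC2T A hA with hd | hs | hs
      · obtain ⟨a, ha⟩ := hS
        exact absurd (Finset.eq_empty_iff_forall_notMem.mp hd a
          (Finset.mem_inter.mpr ⟨hSC2 ha, Finset.mem_of_mem_erase ha⟩)) (fun h => h)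
      · -- C2 ⊆ A : C2 ⊆ A.erase x, so C1 = insert x C2 ⊆ A, so C1 = A
        have : C1 ⊆ A := by
          intro a haC1
          by_cases hax : a = x
          · subst hax; exact hxA
          · exact hs (hC2eq ▸ Finset.mem_erase.mpr ⟨hax, haC1⟩)
        exact hC1A (Finset.Subset.antisymm this hAC1)
      · exact h2x (hs hxA)
    · exfalso
      have hC1eq : C1 = C2.erase x := by rw [← heq, Finset.erase_eq_of_notMem h1x]
      have hAC2 : A ⊆ C2 := min_subset_of ⟨h1, h2, h3, h4⟩ hA hxA hA2 hmin C2 hC2T h2x hC2ne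
      have hSC1 : A.erase x ⊆ C1 := by
        rw [hC1eq]; exact Finset.erase_subset_erase x hAC2
      rcases h4 C1 hC1T A hA with hd | hs | hs
      · obtain ⟨a, ha⟩ := hS
        exact absurd (Finset.eq_empty_iff_forall_notMem.mp hd a
          (Finset.mem_inter.mpr ⟨hSC1 ha, Finset.mem_of_mem_erase ha⟩)) (fun h => h)
      · have : C2 ⊆ A := by
          intro a haC2
          by_cases hax : a = x
          · subst hax; exact hxA
          · exact hs (hC1eq ▸ Finset.mem_erase.mpr ⟨hax, haC2⟩)
        exact hC2A (Finset.Subset.antisymm this hAC2)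
      · exact h1x (hs hxA)
    · rw [← Finset.erase_eq_of_notMem h1x, ← Finset.erase_eq_of_notMem h2x, heq]
  have hcard : T₀.card ≤ (restrict T (X.erase x)).card :=
    Finset.card_le_card_of_injOn _ hsub hinj
  have : T ⊆ insert {x} (insert A T₀) := by
    intro C hC
    simp only [Finset.mem_insert, hT₀, Finset.mem_erase]
    by_cases h1' : C = {x}
    · exact Or.inl h1'
    · by_cases h2' : C = A
      · exact Or.inr (Or.inl h2')
      · exact Or.inr (Or.inr ⟨h2', h1', hC⟩)
  calc T.card ≤ (insert {x} (insert A T₀)).card := Finset.card_le_card this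
    _ ≤ T₀.card + 2 := by
        refine le_trans (Finset.card_insert_le _ _) ?_
        have := Finset.card_insert_le A T₀
        omega
    _ ≤ (restrict T (X.erase x)).card + 2 := by omega

end Aux

lemma hier_card_le_aux : ∀ (n : ℕ) {α : Type*} [DecidableEq α] (X : Finset α)
    (T : Finset (Finset α)), X.card = n → IsHierarchyOn X T → T.card ≤ 2 * n - 1 := by
  intro n
  induction n with
  | zero =>
    intro α _ X T hn hT
    obtain ⟨h1, h2, _, _⟩ := hT
    obtain ⟨a, ha⟩ := (h1 X h2).2
    rw [Finset.card_eq_zero.mp hn] at ha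
    simp at ha
  | succ n ih =>
    intro α _ X T hn hT
    rcases Nat.eq_zero_or_pos n with hn0 | hn1
    · subst hn0
      obtain ⟨a, ha⟩ := Finset.card_eq_one.mp hn
      subst ha
      have : T ⊆ {{a}} := by
        intro C hC
        obtain ⟨hsub, hne⟩ := hT.1 C hC
        simp only [Finset.mem_singleton]
        exact Finset.Nonempty.subset_singleton_iff hne |>.mp hsub
      simpa using Finset.card_le_card this
    · have hX2 : 2 ≤ X.card := by omega
      obtain ⟨x, hx⟩ : X.Nonempty := Finset.card_pos.mp (by omega)
      obtain ⟨A, hA, hxA, hA2, hmin⟩ := exists_minCluster hT hx hX2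
      have herase : (X.erase x).card = n := by
        rw [Finset.card_erase_of_mem hx, hn]; omega
      have hne : (X.erase x).Nonempty := Finset.card_pos.mp (by omega)
      have hrh := restrict_hier hT (Finset.erase_subset x X) hne
      have := ih (X.erase x) (restrict T (X.erase x)) herase hrh
      have hle := card_le_restrict hT hx hX2 hA hxA hA2 hmin
      omega

lemma hier_card_le {α : Type*} [DecidableEq α] {X : Finset α} {T : Finset (Finset α)}
    (hT : IsHierarchyOn X T) : T.card ≤ 2 * X.card - 1 :=
  hier_card_le_aux X.card X T rfl hT

section Aux2
variable {α : Type*} [DecidableEq α] {X : Finset α} {T : Finset (Finset α)} {x : α} {A : Finset α}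

-- laminar comparison of A.erase x with any cluster
lemma sibling_laminar (hT : IsHierarchyOn X T) (hA : A ∈ T) (hxA : x ∈ A) (hA2 : 2 ≤ A.card)
    (hmin : ∀ C ∈ T, x ∈ C → 2 ≤ C.card → A ⊆ C) :
    ∀ C ∈ T, C ∩ A.erase x = ∅ ∨ C ⊆ A.erase x ∨ A.erase x ⊆ C := by
  obtain ⟨h1, h2, h3, h4⟩ := hT
  intro C hC
  rcases h4 A hA C hC with hd | hs | hs
  · left
    apply Finset.eq_empty_iff_forall_notMem.mpr
    intro a ha
    rw [Finset.mem_inter, Finset.mem_erase] at ha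
    exact Finset.eq_empty_iff_forall_notMem.mp hd a
      (Finset.mem_inter.mpr ⟨ha.2.2, ha.1⟩)
  · right; right
    exact (Finset.erase_subset x A).trans hs
  · by_cases hxC : x ∈ C
    · by_cases hCs : C = {x}
      · left
        subst hCs
        apply Finset.eq_empty_iff_forall_notMem.mpr
        intro a ha
        rw [Finset.mem_inter, Finset.mem_singleton, Finset.mem_erase] at ha
        exact ha.2.1 ha.1
      · right; right
        have : A ⊆ C := min_subset_of ⟨h1, h2, h3, h4⟩ hA hxA hA2 hmin C hC hxC hCs
        exact (Finset.erase_subset x A).trans this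
    · right; left
      intro a ha
      exact Finset.mem_erase.mpr ⟨fun h => hxC (h ▸ ha), hs ha⟩

lemma sibling_mem (hT : IsHierarchyOn X T) (hbin : T.card = 2 * X.card - 1)
    (hA : A ∈ T) (hxA : x ∈ A) (hA2 : 2 ≤ A.card)
    (hmin : ∀ C ∈ T, x ∈ C → 2 ≤ C.card → A ⊆ C) :
    A.erase x ∈ T := by
  by_contra hnot
  obtain ⟨h1, h2, h3, h4⟩ := hT
  have hX2 : 2 ≤ X.card := le_trans hA2 (Finset.card_le_card (h1 A hA).1)
  have hSne : (A.erase x).Nonempty := by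
    rw [← Finset.card_pos, Finset.card_erase_of_mem hxA]; omega
  have hins : IsHierarchyOn X (insert (A.erase x) T) := by
    refine ⟨?_, Finset.mem_insert_of_mem h2, fun y hy => Finset.mem_insert_of_mem (h3 y hy), ?_⟩
    · intro C hC
      rcases Finset.mem_insert.mp hC with rfl | hC
      · exact ⟨(Finset.erase_subset x A).trans (h1 A hA).1, hSne⟩
      · exact h1 C hC
    · intro C hC D hD
      have lam := sibling_laminar ⟨h1, h2, h3, h4⟩ hA hxA hA2 hmin
      rcases Finset.mem_insert.mp hC with rfl | hC <;>
        rcases Finset.mem_insert.mp hD with rfl | hD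
      · right; left; exact Finset.Subset.refl _
      · rcases lam D hD with h | h | h
        · left; rw [Finset.inter_comm]; exact h
        · right; right; exact h
        · right; left; exact h
      · exact lam C hC
      · exact h4 C hC D hD
  have := hier_card_le hins
  rw [Finset.card_insert_of_notMem hnot, hbin] at this
  omega

lemma reconstruct (hT : IsHierarchyOn X T) (hbin : T.card = 2 * X.card - 1) (hx : x ∈ X)
    (hA : A ∈ T) (hxA : x ∈ A) (hA2 : 2 ≤ A.card)
    (hmin : ∀ C ∈ T, x ∈ C → 2 ≤ C.card → A ⊆ C) :
    T = insert (A.erase x) (insert {x}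
      (((restrict T (X.erase x)).filter fun C => ¬ A.erase x ⊆ C) ∪
       ((restrict T (X.erase x)).filter fun C => A.erase x ⊆ C).image (insert x))) := by
  obtain ⟨h1, h2, h3, h4⟩ := hT
  have hSne : (A.erase x).Nonempty := by
    rw [← Finset.card_pos, Finset.card_erase_of_mem hxA]; omega
  have hint : ∀ C : Finset α, C ⊆ X → C ∩ X.erase x = C.erase x := by
    intro C hCX
    ext a; simp only [Finset.mem_inter, Finset.mem_erase]
    exact ⟨fun ⟨ha, hne, _⟩ => ⟨hne, ha⟩, fun ⟨hne, ha⟩ => ⟨ha, hne, hCX ha⟩⟩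
  ext C
  simp only [Finset.mem_insert, Finset.mem_union, Finset.mem_filter, Finset.mem_image]
  constructor
  · intro hC
    by_cases hCS : C = A.erase x
    · exact Or.inl hCS
    by_cases hCx : C = {x}
    · exact Or.inr (Or.inl hCx)
    right; right
    by_cases hxC : x ∈ C
    · -- A ⊆ C, C = insert x (C.erase x)
      right
      have hAC : A ⊆ C := min_subset_of ⟨h1, h2, h3, h4⟩ hA hxA hA2 hmin C hC hxC hCx
      refine ⟨C.erase x, ⟨?_, Finset.erase_subset_erase x hAC⟩, Finset.insert_erase hxC⟩
      rw [mem_restrict]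
      refine ⟨⟨C, hC, hint C (h1 C hC).1⟩, ?_⟩
      exact hSne.mono (Finset.erase_subset_erase x hAC)
    · left
      have hCT' : C ∈ restrict T (X.erase x) := by
        rw [mem_restrict]
        refine ⟨⟨C, hC, ?_⟩, (h1 C hC).2⟩
        rw [hint C (h1 C hC).1, Finset.erase_eq_of_notMem hxC]
      refine ⟨hCT', fun hSC => ?_⟩
      -- S ⊆ C, laminar C vs A forces C = S
      rcases h4 C hC A hA with hd | hs | hs
      · obtain ⟨a, ha⟩ := hSne
        exact absurd (Finset.eq_empty_iff_forall_notMem.mp hd a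
          (Finset.mem_inter.mpr ⟨hSC ha, Finset.mem_of_mem_erase ha⟩)) (fun h => h)
      · apply hCS
        apply Finset.Subset.antisymm _ hSC
        intro a ha
        exact Finset.mem_erase.mpr ⟨fun h => hxC (h ▸ ha), hs ha⟩
      · exact hxC (hs hxA)
  · intro hC
    rcases hC with rfl | rfl | ⟨hCT', hnS⟩ | ⟨D, ⟨hDT', hSD⟩, rfl⟩
    · exact sibling_mem ⟨h1, h2, h3, h4⟩ hbin hA hxA hA2 hmin
    · exact h3 x hx
    · -- C ∈ T', ¬ S ⊆ C → C ∈ T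
      rw [mem_restrict] at hCT'
      obtain ⟨⟨D, hD, hDC⟩, hne⟩ := hCT'
      rw [hint D (h1 D hD).1] at hDC
      by_cases hxD : x ∈ D
      · exfalso
        have hDs : D ≠ {x} := by
          rintro rfl
          rw [Finset.erase_singleton] at hDC
          exact hne.ne_empty hDC.symm
        have hAD : A ⊆ D := min_subset_of ⟨h1, h2, h3, h4⟩ hA hxA hA2 hmin D hD hxD hDs
        exact hnS (hDC ▸ Finset.erase_subset_erase x hAD)
      · rw [Finset.erase_eq_of_notMem hxD] at hDC
        exact hDC ▸ hD
    · -- D ∈ T', S ⊆ D → insert x D ∈ T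
      rw [mem_restrict] at hDT'
      obtain ⟨⟨E, hE, hED⟩, hne⟩ := hDT'
      rw [hint E (h1 E hE).1] at hED
      by_cases hxE : x ∈ E
      · have : insert x D = E := by rw [← hED, Finset.insert_erase hxE]
        rw [this]; exact hE
      · rw [Finset.erase_eq_of_notMem hxE] at hED
        subst hED
        -- E ⊇ S, x ∉ E, laminar E vs A forces E = S, insert x S = A
        have hEeq : E = A.erase x := by
          rcases h4 E hE A hA with hd | hs | hs
          · obtain ⟨a, ha⟩ := hSne
            exact absurd (Finset.eq_empty_iff_forall_notMem.mp hd a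
              (Finset.mem_inter.mpr ⟨hSD ha, Finset.mem_of_mem_erase ha⟩)) (fun h => h)
          · apply Finset.Subset.antisymm _ hSD
            intro a ha
            exact Finset.mem_erase.mpr ⟨fun h => hxE (h ▸ ha), hs ha⟩
          · exact absurd (hs hxA) hxE
        rw [hEeq, Finset.insert_erase hxA]
        exact hA

end Aux2
noncomputable def BH {α : Type*} [DecidableEq α] (X : Finset α) : Finset (Finset (Finset α)) :=
  @Finset.filter _ (fun T => IsBinaryHierarchyOn X T) (Classical.decPred _) X.powerset.powerset

lemma mem_BH {α : Type*} [DecidableEq α] {X : Finset α} {T : Finset (Finset α)} :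
    T ∈ BH X ↔ IsBinaryHierarchyOn X T := by
  classical
  unfold BH
  rw [Finset.mem_filter, Finset.mem_powerset]
  constructor
  · exact fun h => h.2
  · intro h
    exact ⟨fun C hC => Finset.mem_powerset.mpr (h.1.1 C hC).1, h⟩

noncomputable def minA {α : Type*} [DecidableEq α] (x : α) (T : Finset (Finset α)) : Finset α :=
  if h : ∃ A, A ∈ T ∧ x ∈ A ∧ 2 ≤ A.card ∧ ∀ C ∈ T, x ∈ C → 2 ≤ C.card → A ⊆ C
  then h.choose else ∅

lemma minA_spec {α : Type*} [DecidableEq α] {X : Finset α} {T : Finset (Finset α)} {x : α}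
    (hT : IsHierarchyOn X T) (hx : x ∈ X) (hX2 : 2 ≤ X.card) :
    minA x T ∈ T ∧ x ∈ minA x T ∧ 2 ≤ (minA x T).card ∧
      ∀ C ∈ T, x ∈ C → 2 ≤ C.card → minA x T ⊆ C := by
  obtain ⟨A, hA, h2, h3, h4⟩ := exists_minCluster hT hx hX2
  have h : ∃ A, A ∈ T ∧ x ∈ A ∧ 2 ≤ A.card ∧ ∀ C ∈ T, x ∈ C → 2 ≤ C.card → A ⊆ C :=
    ⟨A, hA, h2, h3, h4⟩
  rw [minA, dif_pos h]
  exact h.choose_spec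

def D : ℕ → ℕ
  | 0 => 1
  | 1 => 1
  | (n+2) => (2*(n+1)-1) * D (n+1)

lemma BH_card_le : ∀ (n : ℕ) {α : Type*} [DecidableEq α] (X : Finset α),
    X.card = n → (BH X).card ≤ D n := by
  intro n
  induction n with
  | zero =>
    intro α _ X hn
    have : BH X = ∅ := by
      rw [Finset.eq_empty_iff_forall_notMem]
      intro T hT
      obtain ⟨⟨h1, h2, _, _⟩, _⟩ := mem_BH.mp hT
      obtain ⟨a, ha⟩ := (h1 X h2).2
      rw [Finset.card_eq_zero.mp hn] at ha
      simp at ha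
    simp [this, D]
  | succ n ih =>
    intro α _ X hn
    rcases Nat.eq_zero_or_pos n with hn0 | hn1
    · subst hn0
      obtain ⟨a, rfl⟩ := Finset.card_eq_one.mp hn
      have : ∀ T ∈ BH ({a} : Finset α), T = {{a}} := by
        intro T hT
        obtain ⟨⟨h1, h2, _, _⟩, hcard⟩ := mem_BH.mp hT
        have hsub : T ⊆ {{a}} := by
          intro C hC
          obtain ⟨hs, hne⟩ := h1 C hC
          simp only [Finset.mem_singleton]
          exact (Finset.Nonempty.subset_singleton_iff hne).mp hs
        apply Finset.eq_of_subset_of_card_le hsub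
        rw [Finset.card_singleton] at hcard
        rw [Finset.card_singleton]
        omega
      have : (BH ({a} : Finset α)).card ≤ 1 := by
        rw [Finset.card_le_one]
        intro T hT S hS
        rw [this T hT, this S hS]
      simpa [D] using this
    · have hX2 : 2 ≤ X.card := by omega
      obtain ⟨x, hx⟩ : X.Nonempty := Finset.card_pos.mp (by omega)
      set X' := X.erase x with hX'
      have hX'card : X'.card = n := by
        rw [hX', Finset.card_erase_of_mem hx, hn]; omega
      have hX'ne : X'.Nonempty := Finset.card_pos.mp (by omega)
      -- the encoding map
      have key : (BH X).card ≤ ((BH X').sigma fun T' => T').card := by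
        apply Finset.card_le_card_of_injOn
          (fun T => ⟨restrict T X', (minA x T).erase x⟩)
        · intro T hT
          obtain ⟨hTh, hTcard⟩ := mem_BH.mp hT
          obtain ⟨hA, hxA, hA2, hmin⟩ := minA_spec hTh hx hX2
          have hrh : IsHierarchyOn X' (restrict T X') :=
            restrict_hier hTh (Finset.erase_subset x X) hX'ne
          have hub := hier_card_le hrh
          have hlb := card_le_restrict hTh hx hX2 hA hxA hA2 hmin
          rw [Finset.mem_coe, Finset.mem_sigma]
          dsimp only
          constructor
          · rw [mem_BH]
            refine ⟨hrh, ?_⟩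
            rw [← hX'] at hlb
            rw [hX'card] at hub ⊢
            rw [hn] at hTcard
            omega
          · rw [mem_restrict]
            have hAX : minA x T ⊆ X := (hTh.1 _ hA).1
            refine ⟨⟨minA x T, hA, ?_⟩, ?_⟩
            · ext b
              simp only [Finset.mem_inter, hX', Finset.mem_erase]
              exact ⟨fun ⟨hb, hbx, _⟩ => ⟨hbx, hb⟩, fun ⟨hbx, hb⟩ => ⟨hb, hbx, hAX hb⟩⟩
            · rw [← Finset.card_pos, Finset.card_erase_of_mem hxA]
              omega
        · intro T1 hT1 T2 hT2 heq
          simp only [Finset.mem_coe] at hT1 hT2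
          obtain ⟨hT1h, hT1card⟩ := mem_BH.mp hT1
          obtain ⟨hT2h, hT2card⟩ := mem_BH.mp hT2
          obtain ⟨hA1, hxA1, hA12, hmin1⟩ := minA_spec hT1h hx hX2
          obtain ⟨hA2', hxA2, hA22, hmin2⟩ := minA_spec hT2h hx hX2
          obtain ⟨e1, e2⟩ : restrict T1 X' = restrict T2 X' ∧
              (minA x T1).erase x = (minA x T2).erase x := by
            constructor
            · exact congrArg Sigma.fst heq
            · have := congrArg Sigma.snd heq
              simpa using this
          rw [reconstruct hT1h hT1card hx hA1 hxA1 hA12 hmin1,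
            reconstruct hT2h hT2card hx hA2' hxA2 hA22 hmin2, ← hX', e1, e2]
      have hsum : ((BH X').sigma fun T' => T').card = ∑ T' ∈ BH X', T'.card :=
        Finset.card_sigma _ _
      have hconst : ∀ T' ∈ BH X', T'.card = 2 * n - 1 := by
        intro T' hT'
        have h := (mem_BH.mp hT').2
        rw [hX'card] at h
        exact h
      calc (BH X).card ≤ ∑ T' ∈ BH X', T'.card := by rw [← hsum]; exact key
        _ = (BH X').card * (2 * n - 1) := by
            rw [Finset.sum_congr rfl hconst, Finset.sum_const, smul_eq_mul]
        _ ≤ D n * (2 * n - 1) := Nat.mul_le_mul_right _ (ih X' hX'card)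
        _ = D (n + 1) := by
            rcases n with _ | m
            · omega
            · rw [show D (m + 2) = (2*(m+1)-1) * D (m+1) from rfl]
              ring

/-- Pigeonhole obstruction: for the 26 blocks `B k` of a Steiner triple system on 13 points,
with `T k 0, T k 1, T k 2` the three distinct rooted binary trees on leaf set `B k`,
there is no family of rooted binary trees `T' f` on all 13 points, indexed by all `3^26`
functions `f`, with `T' f | B k = T k (f k)` for every `k` (such a family would be
injective into a set of size `23!! < 3^26`). -/
theorem stmt_12 (B : Fin 26 → Finset (Fin 13))
    (hB3 : ∀ k, (B k).card = 3)
    (hSTS : ∀ p : Finset (Fin 13), p.card = 2 → ∃! k, p ⊆ B k)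
    (T : Fin 26 → Fin 3 → Finset (Finset (Fin 13)))
    (hT : ∀ k j, IsBinaryHierarchyOn (B k) (T k j))
    (hTinj : ∀ k, Function.Injective (T k)) :
    ¬ ∃ T' : (Fin 26 → Fin 3) → Finset (Finset (Fin 13)),
      ∀ f, IsBinaryHierarchyOn Finset.univ (T' f) ∧
        ∀ k, restrict (T' f) (B k) = T k (f k) := by
  rintro ⟨T', hT'⟩
  have hmaps : ∀ f ∈ (Finset.univ : Finset (Fin 26 → Fin 3)),
      T' f ∈ BH (Finset.univ : Finset (Fin 13)) :=
    fun f _ => mem_BH.mpr (hT' f).1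
  have hinj : Set.InjOn T' (Finset.univ : Finset (Fin 26 → Fin 3)) := by
    intro f _ g _ h
    funext k
    apply hTinj k
    rw [← (hT' f).2 k, ← (hT' g).2 k, h]
  have hle := Finset.card_le_card_of_injOn T' hmaps hinj
  have h1 : (Finset.univ : Finset (Fin 26 → Fin 3)).card = 3 ^ 26 := by
    simp
  have h2 : (BH (Finset.univ : Finset (Fin 13))).card ≤ D 13 :=
    BH_card_le 13 _ (by simp)
  have h3 : D 13 = 316234143225 := by norm_num [D]
  rw [h1] at hle
  have : (3 : ℕ) ^ 26 = 2541865828329 := by norm_num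
  omega
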